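/- Let G be a finite simple graph, n ≥ 1, and let U assign to every dart d an invertible n×n complex matrix such that U(reversal of d) = (U d)⁻¹. Define the block matrix J, indexed by pairs (dart, index in Fin n), whose (d',d) block equals U d if d' is the reversal of d and 0 otherwise. Then for every complex u, det(I − u·J) = (1 − u²)^{n|E|}, where |E| is the number of unoriented edges of G. -/

import Mathlib

open Matrix

variable {V : Type*}

/-- The block edge-inversion matrix `J` twisted by the potential `U`: the `(d', d)` block
equals `U d` if `d'` is the reversal of `d`, and `0` otherwise. -/
def Jblock (G : SimpleGraph V) [DecidableEq V] (n : ℕ)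
    (U : G.Dart → Matrix (Fin n) (Fin n) ℂ) :
    Matrix (G.Dart × Fin n) (G.Dart × Fin n) ℂ :=
  fun p q => if p.1 = q.1.symm then U q.1 p.2 q.2 else 0

section Aux

open Polynomial

variable (G : SimpleGraph V) [Fintype V] [DecidableEq V] [DecidableRel G.Adj]

/-- A sign on darts which is antisymmetric under reversal. -/
noncomputable def dsign (d : G.Dart) : ℂ :=
  if (Fintype.equivFin V) d.toProd.1 < (Fintype.equivFin V) d.toProd.2 then 1 else -1

omit [DecidableEq V] [DecidableRel G.Adj] in
lemma dsign_mul_self (d : G.Dart) : dsign G d * dsign G d = 1 := by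
  unfold dsign; split <;> ring

omit [DecidableEq V] [DecidableRel G.Adj] in
lemma dsign_symm_mul (d : G.Dart) : dsign G d.symm * dsign G d = -1 := by
  have hne : (Fintype.equivFin V) d.toProd.1 ≠ (Fintype.equivFin V) d.toProd.2 :=
    fun h => d.fst_ne_snd ((Fintype.equivFin V).injective h)
  have h1 : d.symm.toProd.1 = d.toProd.2 := rfl
  have h2 : d.symm.toProd.2 = d.toProd.1 := rfl
  unfold dsign
  rw [h1, h2]
  rcases lt_or_gt_of_ne hne with h | h
  · rw [if_pos h, if_neg (not_lt.mpr h.le)]; ring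
  · rw [if_neg (not_lt.mpr h.le), if_pos h]; ring

variable {n : ℕ} (U : G.Dart → Matrix (Fin n) (Fin n) ℂ)

lemma Jblock_mul_Jblock (hUinv : ∀ d, IsUnit (U d)) (hUrev : ∀ d, U d.symm = (U d)⁻¹) :
    Jblock G n U * Jblock G n U = 1 := by
  ext p q
  rw [mul_apply, one_apply]
  have key : ∀ r : G.Dart × Fin n,
      Jblock G n U p r * Jblock G n U r q
        = if r.1 = q.1.symm ∧ p.1 = q.1 then U q.1.symm p.2 r.2 * U q.1 r.2 q.2 else 0 := by
    rintro ⟨d, i⟩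
    simp only [Jblock]
    by_cases h1 : d = q.1.symm
    · subst h1
      by_cases h2 : p.1 = q.1
      · simp [h2, SimpleGraph.Dart.symm_symm]
      · have : ¬ p.1 = q.1.symm.symm := by simpa [SimpleGraph.Dart.symm_symm] using h2
        simp [h2, this]
    · simp [h1]
  rw [Finset.sum_congr rfl fun r _ => key r]
  by_cases h2 : p.1 = q.1
  · rw [Fintype.sum_prod_type]
    rw [Finset.sum_eq_single q.1.symm]
    · simp only [h2, and_true, eq_self_iff_true, if_true]
      have : ∑ i, U q.1.symm p.2 i * U q.1 i q.2 = (U q.1.symm * U q.1) p.2 q.2 := by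
        rw [mul_apply]
      rw [this, hUrev, Matrix.nonsing_inv_mul _ ((Matrix.isUnit_iff_isUnit_det _).mp (hUinv q.1))]
      rw [Matrix.one_apply]
      by_cases h3 : p.2 = q.2
      · simp [h3, Prod.ext_iff, h2]
      · simp [h3, Prod.ext_iff, h2]
    · intro d _ hd; simp [hd]
    · simp
  · simp [h2, Prod.ext_iff]

lemma diag_conj_Jblock :
    diagonal (fun p : G.Dart × Fin n => dsign G p.1) * Jblock G n U *
      diagonal (fun p : G.Dart × Fin n => dsign G p.1) = -(Jblock G n U) := by
  ext p q
  rw [mul_diagonal, diagonal_mul, neg_apply]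
  by_cases h : p.1 = q.1.symm
  · have hs : dsign G p.1 * dsign G q.1 = -1 := by rw [h]; exact dsign_symm_mul G q.1
    simp only [Jblock, if_pos h]
    linear_combination (U q.1 p.2 q.2) * hs
  · simp [Jblock, if_neg h]

end Aux

open Polynomial in
/-- `det(I − u·J) = (1 − u²)^{n|E|}` for a unitary-type potential `U` on darts. -/
theorem det_one_sub_smul_Jblock (G : SimpleGraph V) [Fintype V] [DecidableEq V]
    [DecidableRel G.Adj] (n : ℕ) (hn : 1 ≤ n)
    (U : G.Dart → Matrix (Fin n) (Fin n) ℂ)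
    (hUinv : ∀ d, IsUnit (U d)) (hUrev : ∀ d, U d.symm = (U d)⁻¹) (u : ℂ) :
    Matrix.det (1 - u • Jblock G n U) = (1 - u ^ 2) ^ (n * G.edgeFinset.card) := by
  classical
  set J : Matrix (G.Dart × Fin n) (G.Dart × Fin n) ℂ := Jblock G n U with hJ
  set A : Matrix (G.Dart × Fin n) (G.Dart × Fin n) ℂ[X] := J.map C with hA
  have hAA : A * A = 1 := by
    rw [hA, ← Matrix.map_mul, Jblock_mul_Jblock G U hUinv hUrev,
      Matrix.map_one _ (map_zero C) (map_one C)]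
  set D : Matrix (G.Dart × Fin n) (G.Dart × Fin n) ℂ[X] :=
    diagonal (fun p => C (dsign G p.1)) with hD
  have hDD : D * D = 1 := by
    rw [hD, diagonal_mul_diagonal]
    have h1 : (fun i : G.Dart × Fin n => C (dsign G i.1) * C (dsign G i.1))
        = fun _ => (1 : ℂ[X]) := by
      funext i; rw [← _root_.map_mul, dsign_mul_self]; exact map_one C
    rw [h1, diagonal_one]
  have hDJD : D * A * D = -A := by
    have hmapD : D = (diagonal (fun p : G.Dart × Fin n => dsign G p.1)).map C := by
      rw [Matrix.diagonal_map (map_zero C)]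
    rw [hmapD, hA, ← Matrix.map_mul, ← Matrix.map_mul, diag_conj_Jblock]
    ext i j
    simp [Matrix.map_apply, hJ]
  set p : ℂ[X] := Matrix.det (1 - (X : ℂ[X]) • A) with hp
  set q : ℂ[X] := ((1 : ℂ[X]) - X ^ 2) ^ (n * G.edgeFinset.card) with hq
  have hcard : Fintype.card (G.Dart × Fin n) = n * G.edgeFinset.card + n * G.edgeFinset.card := by
    rw [Fintype.card_prod, Fintype.card_fin, G.dart_card_eq_twice_card_edges]
    ring
  have hmul : (1 - (X : ℂ[X]) • A) * (1 + (X : ℂ[X]) • A) = ((1 : ℂ[X]) - X ^ 2) • 1 := by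
    have h1 : (1 - (X : ℂ[X]) • A) * (1 + (X : ℂ[X]) • A)
        = 1 - ((X : ℂ[X]) * X) • (A * A) := by
      rw [sub_mul, one_mul, mul_add, mul_one, smul_mul_assoc, mul_smul_comm, smul_smul]
      abel
    rw [h1, hAA, ← sq, sub_smul, one_smul]
  have hdet2 : p * Matrix.det (1 + (X : ℂ[X]) • A) = q * q := by
    rw [hp, ← Matrix.det_mul, hmul, Matrix.smul_one_eq_diagonal, Matrix.det_diagonal,
      Finset.prod_const, hq, Finset.card_univ, hcard, pow_add]
  have hsym : Matrix.det (1 + (X : ℂ[X]) • A) = p := by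
    have h1 : D * (1 - (X : ℂ[X]) • A) * D = 1 + (X : ℂ[X]) • A := by
      rw [mul_sub, sub_mul, mul_one, mul_smul_comm, smul_mul_assoc, hDD, hDJD]
      simp
    have h2 : Matrix.det D * Matrix.det D = 1 := by
      rw [← Matrix.det_mul, hDD, Matrix.det_one]
    calc Matrix.det (1 + (X : ℂ[X]) • A) = Matrix.det (D * (1 - (X : ℂ[X]) • A) * D) := by
          rw [h1]
      _ = Matrix.det D * Matrix.det D * Matrix.det (1 - (X : ℂ[X]) • A) := by
          rw [Matrix.det_mul, Matrix.det_mul]; ring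
      _ = p := by rw [h2, one_mul]
  have hsq : p * p = q * q := by rw [← hdet2, hsym]
  have hmap0 : (1 - (X : ℂ[X]) • A).map (evalRingHom (0 : ℂ)) = 1 := by
    ext i j
    by_cases hij : i = j <;>
      simp [hij, Matrix.map_apply, Matrix.sub_apply, Matrix.smul_apply, Matrix.one_apply, hA]
  have hpe : p.eval 0 = 1 := by
    rw [hp, ← coe_evalRingHom, RingHom.map_det, RingHom.mapMatrix_apply, hmap0, Matrix.det_one]
  have hpq : p = q := by
    have hfac : (p - q) * (p + q) = 0 := by linear_combination hsq
    rcases mul_eq_zero.mp hfac with h | h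
    · exact sub_eq_zero.mp h
    · exfalso
      have hev : (p + q).eval 0 = 0 := by rw [h, eval_zero]
      have hqe : q.eval 0 = 1 := by simp [hq]
      rw [eval_add, hpe, hqe] at hev
      norm_num at hev
  have hmapu : (1 - (X : ℂ[X]) • A).map (evalRingHom u) = 1 - u • J := by
    ext i j
    simp only [Matrix.map_apply, Matrix.sub_apply, Matrix.smul_apply, Matrix.one_apply, hA,
      smul_eq_mul, eval_sub, eval_mul, eval_X, eval_C, apply_ite (Polynomial.eval u),
      eval_one, eval_zero, coe_evalRingHom]
  have hlhs : Polynomial.eval u p = Matrix.det (1 - u • J) := by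
    rw [hp, ← coe_evalRingHom, RingHom.map_det, RingHom.mapMatrix_apply, hmapu]
  have := congrArg (Polynomial.eval u) hpq
  rw [hlhs, hq] at this
  rw [this]
  simp
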